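/- Let r ≥ 2 and let (s₁^{(m)},…,s_r^{(m)}) be a sequence of zeros of ζ_r (i.e. ζ_r(s₁^{(m)},…,s_r^{(m)}) = 0) with all coordinates of real part > 1, with Re(s₁^{(m)}) → +∞ and (s₂^{(m)},…,s_r^{(m)}) lying in a compact subset of {Re > 1}^{r−1}. Then every limit point (ρ₂,…,ρ_r) of the sequence (s₂^{(m)},…,s_r^{(m)}) satisfies F_{r−1}(ρ₂,…,ρ_r) = 0, where F_{r−1}(s₂,…,s_r) = Σ_{j=1}^{r−1} (−1)^{r−j+1} ζ_j(s_{r−j+1},…,s_r) − (−1)^r. -/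

import Mathlib

noncomputable def ez (r : ℕ) (s : Fin r → ℂ) : ℂ :=
  ∑' n : Fin r → ℕ, ∏ k : Fin r,
    ((∑ i ∈ Finset.Iic k, (n i : ℂ)) + (k : ℕ) + 1) ^ (-(s k))

noncomputable def Fpoly (q : ℕ) (t : Fin q → ℂ) : ℂ :=
  (∑ j ∈ (Finset.Icc 1 q).attach,
      (-1 : ℂ) ^ (q - j.1 + 2) *
        ez j.1 (fun k => t ⟨q - j.1 + k.1, by
          have h1 := j.2
          have h2 := k.isLt
          simp only [Finset.mem_Icc] at h1
          omega⟩)) -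
    (-1 : ℂ) ^ (q + 1)

/-! ### Auxiliary definitions -/

noncomputable def trm (q a : ℕ) (t : Fin q → ℂ) (n : Fin q → ℕ) : ℂ :=
  ∏ k : Fin q, ((a + (∑ i ∈ Finset.Iic k, n i) + k + 1 : ℕ) : ℂ) ^ (-(t k))

noncomputable def EZ (a q : ℕ) (t : Fin q → ℂ) : ℂ := ∑' n : Fin q → ℕ, trm q a t n

noncomputable def maj (q : ℕ) (τ : ℝ) (n : Fin q → ℕ) : ℝ :=
  ∏ k : Fin q, ((n k : ℝ) + 1) ^ (-τ)

noncomputable def pad (q : ℕ) (t : Fin q → ℂ) (i : ℕ) : ℂ :=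
  if h : i < q then t ⟨i, h⟩ else 0

lemma ez_eq_EZ (q : ℕ) (t : Fin q → ℂ) : ez q t = EZ 0 q t := by
  refine tsum_congr fun n => Finset.prod_congr rfl fun k _ => ?_
  congr 1
  push_cast
  ring

lemma maj_nonneg (q : ℕ) (τ : ℝ) (n : Fin q → ℕ) : 0 ≤ maj q τ n := by
  refine Finset.prod_nonneg fun k _ => Real.rpow_nonneg (by positivity) _

lemma summable_maj (q : ℕ) {τ : ℝ} (hτ : 1 < τ) : Summable (maj q τ) := by
  induction q with
  | zero => exact Summable.of_finite
  | succ q ih =>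
    have h1 : Summable (fun n : ℕ => ((n : ℝ) + 1) ^ (-τ)) := by
      have := (Real.summable_nat_rpow (p := -τ)).2 (by linarith)
      have := (summable_nat_add_iff (f := fun n : ℕ => (n : ℝ) ^ (-τ)) 1).2 this
      refine this.congr fun n => ?_
      push_cast
      ring_nf
    have hprod : Summable (fun p : ℕ × (Fin q → ℕ) =>
        ((p.1 : ℝ) + 1) ^ (-τ) * maj q τ p.2) :=
      h1.mul_of_nonneg ih (fun n => Real.rpow_nonneg (by positivity) _)
        (fun n => maj_nonneg q τ n)
    refine ((Fin.consEquiv (fun _ : Fin (q+1) => ℕ)).summable_iff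
      (f := maj (q+1) τ)).1 (hprod.congr fun p => ?_)
    show _ = maj (q + 1) τ (Fin.cons p.1 p.2)
    simp [maj, Fin.prod_univ_succ, Fin.cons_zero, Fin.cons_succ]

lemma norm_natCast_cpow_le {N n : ℕ} {s : ℂ} {τ : ℝ} (hτ0 : 0 ≤ τ) (hτ : τ ≤ s.re)
    (hN : n + 1 ≤ N) : ‖(N : ℂ) ^ (-s)‖ ≤ ((n : ℝ) + 1) ^ (-τ) := by
  have hNpos : (0 : ℝ) < N := by exact_mod_cast Nat.lt_of_lt_of_le n.succ_pos hN
  have hN1 : (1 : ℝ) ≤ N := by exact_mod_cast Nat.one_le_iff_ne_zero.2 (by omega)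
  have hnN : ((n : ℝ) + 1) ≤ N := by exact_mod_cast hN
  have hnorm : ‖(N : ℂ) ^ (-s)‖ = (N : ℝ) ^ (-s).re := by
    rw [show ((N : ℕ) : ℂ) = (((N : ℕ) : ℝ) : ℂ) by push_cast; ring]
    rw [Complex.norm_cpow_eq_rpow_re_of_pos hNpos]
  rw [hnorm]
  calc (N : ℝ) ^ (-s).re ≤ (N : ℝ) ^ (-τ) := by
        apply Real.rpow_le_rpow_of_exponent_le hN1
        simp only [Complex.neg_re, neg_le_neg_iff]
        exact hτ
    _ ≤ ((n : ℝ) + 1) ^ (-τ) := by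
        rw [Real.rpow_neg (by positivity), Real.rpow_neg (by positivity)]
        exact inv_anti₀ (by positivity) (Real.rpow_le_rpow (by positivity) hnN hτ0)

lemma norm_natCast_cpow_le2 {N n : ℕ} {s : ℂ} {τ : ℝ} (hτ0 : 0 ≤ τ) (hτ2 : τ ≤ 2)
    (h2 : 2 ≤ s.re) (hN : n + 2 ≤ N) :
    ‖(N : ℂ) ^ (-s)‖ ≤ 2 ^ (2 - s.re) * ((n : ℝ) + 1) ^ (-τ) := by
  have hNpos : (0 : ℝ) < N := by
    have : 0 < N := by omega
    exact_mod_cast this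
  have hN2 : (2 : ℝ) ≤ N := by exact_mod_cast le_trans (by omega) hN
  have hnN : ((n : ℝ) + 1) ≤ N := by
    have : n + 1 ≤ N := by omega
    exact_mod_cast this
  have hnorm : ‖(N : ℂ) ^ (-s)‖ = (N : ℝ) ^ (-s).re := by
    rw [show ((N : ℕ) : ℂ) = (((N : ℕ) : ℝ) : ℂ) by push_cast; ring]
    rw [Complex.norm_cpow_eq_rpow_re_of_pos hNpos]
  rw [hnorm]
  have hsplit : (N : ℝ) ^ (-s).re = (N : ℝ) ^ (2 - s.re) * (N : ℝ) ^ (-(2:ℝ)) := by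
    rw [← Real.rpow_add hNpos]
    congr 1
    simp [Complex.neg_re]
    ring
  rw [hsplit]
  have h1 : (N : ℝ) ^ (2 - s.re) ≤ 2 ^ (2 - s.re) := by
    rw [show (2 : ℝ) - s.re = -(s.re - 2) by ring, Real.rpow_neg hNpos.le,
      Real.rpow_neg (by norm_num : (0:ℝ) ≤ 2)]
    exact inv_anti₀ (by positivity)
      (Real.rpow_le_rpow (by norm_num) hN2 (by linarith))
  have h2 : (N : ℝ) ^ (-(2:ℝ)) ≤ ((n : ℝ) + 1) ^ (-τ) := by
    calc (N : ℝ) ^ (-(2:ℝ)) ≤ ((n : ℝ) + 1) ^ (-(2:ℝ)) := by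
          rw [Real.rpow_neg hNpos.le, Real.rpow_neg (by positivity)]
          exact inv_anti₀ (by positivity)
            (Real.rpow_le_rpow (by positivity) hnN (by norm_num))
      _ ≤ ((n : ℝ) + 1) ^ (-τ) := by
          apply Real.rpow_le_rpow_of_exponent_le (by simp)
          linarith
  calc (N : ℝ) ^ (2 - s.re) * (N : ℝ) ^ (-(2:ℝ))
      ≤ 2 ^ (2 - s.re) * ((n : ℝ) + 1) ^ (-τ) :=
        mul_le_mul h1 h2 (Real.rpow_nonneg hNpos.le _) (Real.rpow_nonneg (by norm_num) _)

lemma norm_trm_le (q a : ℕ) (t : Fin q → ℂ) (n : Fin q → ℕ) {τ : ℝ}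
    (hτ0 : 0 ≤ τ) (h : ∀ k, τ ≤ (t k).re) : ‖trm q a t n‖ ≤ maj q τ n := by
  rw [trm, norm_prod, maj]
  refine Finset.prod_le_prod (fun k _ => norm_nonneg _) fun k _ => ?_
  refine norm_natCast_cpow_le hτ0 (h k) ?_
  have : n k ≤ ∑ i ∈ Finset.Iic k, n i :=
    Finset.single_le_sum (fun i _ => Nat.zero_le _) (Finset.mem_Iic.2 le_rfl)
  omega

lemma summable_trm (q a : ℕ) (t : Fin q → ℂ) (h : ∀ k, 1 < (t k).re) :
    Summable (trm q a t) := by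
  rcases Nat.eq_zero_or_pos q with hq | hq
  · subst hq; exact Summable.of_finite
  · have : Nonempty (Fin q) := ⟨⟨0, hq⟩⟩
    set τ := Finset.univ.inf' Finset.univ_nonempty (fun k => (t k).re) with hτdef
    have hτ : 1 < τ := by
      rw [hτdef, Finset.lt_inf'_iff]
      exact fun k _ => h k
    exact Summable.of_norm_bounded (summable_maj q hτ)
      (fun n => norm_trm_le q a t n (by linarith) fun k =>
        Finset.inf'_le _ (Finset.mem_univ k))

lemma Iic_zero_fin (q : ℕ) : Finset.Iic (0 : Fin (q + 1)) = {0} := by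
  ext i
  simp [Fin.le_zero_iff]

lemma sum_Iic_succ_cons {q : ℕ} (c : ℕ) (n : Fin q → ℕ) (j : Fin q) :
    ∑ i ∈ Finset.Iic j.succ, (Fin.cons c n : Fin (q + 1) → ℕ) i
      = c + ∑ i ∈ Finset.Iic j, n i := by
  have hset : Finset.Iic j.succ
      = insert (0 : Fin (q + 1)) ((Finset.Iic j).map (Fin.succEmb q)) := by
    ext i
    simp only [Finset.mem_Iic, Finset.mem_insert, Finset.mem_map,
      Fin.coe_succEmb]
    constructor
    · intro hi
      rcases Fin.eq_zero_or_eq_succ i with h0 | ⟨i', rfl⟩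
      · exact Or.inl h0
      · exact Or.inr ⟨i', Fin.succ_le_succ_iff.mp hi, rfl⟩
    · rintro (rfl | ⟨i', hi', rfl⟩)
      · exact Fin.zero_le _
      · exact Fin.succ_le_succ_iff.mpr hi'
  rw [hset, Finset.sum_insert (by simp [Fin.coe_succEmb, Fin.succ_ne_zero]),
    Finset.sum_map]
  simp [Fin.coe_succEmb, Fin.cons_zero, Fin.cons_succ]

lemma trm_cons (q a c : ℕ) (t : Fin (q + 1) → ℂ) (n : Fin q → ℕ) :
    trm (q + 1) a t (Fin.cons c n)
      = ((a + c + 1 : ℕ) : ℂ) ^ (-(t 0)) * trm q (a + c + 1) (Fin.tail t) n := by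
  have expand : trm (q + 1) a t (Fin.cons c n)
      = (((a + (∑ i ∈ Finset.Iic (0 : Fin (q+1)), (Fin.cons c n : Fin (q+1) → ℕ) i)
            + (0 : Fin (q+1)).val + 1 : ℕ)) : ℂ) ^ (-(t 0))
        * ∏ j : Fin q, ((a + (∑ i ∈ Finset.Iic (Fin.succ j),
            (Fin.cons c n : Fin (q+1) → ℕ) i) + (Fin.succ j).val + 1 : ℕ) : ℂ)
              ^ (-(t (Fin.succ j))) := by
    rw [trm, Fin.prod_univ_succ]
  rw [expand]
  refine congrArg₂ (· * ·) ?_ ?_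
  · congr 2
  · rw [trm]
    refine Finset.prod_congr rfl fun j _ => ?_
    have hb : a + (∑ i ∈ Finset.Iic (Fin.succ j), (Fin.cons c n : Fin (q+1) → ℕ) i)
        + (Fin.succ j).val + 1 = a + c + 1 + (∑ i ∈ Finset.Iic j, n i) + j.val + 1 := by
      rw [sum_Iic_succ_cons, Fin.val_succ]
      omega
    rw [hb]
    rfl

lemma EZ_hasSum_fiber (a q : ℕ) (t : Fin (q + 1) → ℂ) (h : ∀ k, 1 < (t k).re) :
    HasSum (fun c : ℕ => ((a + c + 1 : ℕ) : ℂ) ^ (-(t 0)) * EZ (a + c + 1) q (Fin.tail t))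
      (EZ a (q + 1) t) := by
  have hsum : Summable (trm (q + 1) a t) := summable_trm _ _ _ h
  have htail : ∀ k, 1 < ((Fin.tail t) k).re := fun k => h k.succ
  have hF : HasSum (trm (q + 1) a t ∘ (Fin.consEquiv (fun _ : Fin (q + 1) => ℕ)))
      (EZ a (q + 1) t) :=
    ((Fin.consEquiv (fun _ : Fin (q + 1) => ℕ)).hasSum_iff
      (f := trm (q + 1) a t) (a := EZ a (q + 1) t)).2 hsum.hasSum
  refine HasSum.prod_fiberwise hF fun c => ?_
  have h2 := ((summable_trm q (a + c + 1) (Fin.tail t) htail).hasSum).mul_left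
    (((a + c + 1 : ℕ) : ℂ) ^ (-(t 0)))
  refine h2.congr_fun fun n => ?_
  exact trm_cons q a c t n

lemma EZ_succ (a q : ℕ) (t : Fin (q + 1) → ℂ) (h : ∀ k, 1 < (t k).re) :
    EZ a (q + 1) t
      = ((a + 1 : ℕ) : ℂ) ^ (-(t 0)) * EZ (a + 1) q (Fin.tail t) + EZ (a + 1) (q + 1) t := by
  have hfib := EZ_hasSum_fiber a q t h
  have hfib' := EZ_hasSum_fiber (a + 1) q t h
  rw [← hfib.tsum_eq, Summable.tsum_eq_zero_add hfib.summable]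
  refine congrArg₂ (· + ·) ?_ ?_
  · norm_num
  · rw [← hfib'.tsum_eq]
    refine tsum_congr fun c => ?_
    show ((a + (c + 1) + 1 : ℕ) : ℂ) ^ (-(t 0)) * EZ (a + (c + 1) + 1) q (Fin.tail t) = _
    have harg : a + (c + 1) + 1 = a + 1 + c + 1 := by omega
    rw [harg]

lemma EZ_zero (a : ℕ) (t : Fin 0 → ℂ) : EZ a 0 t = 1 := by
  rw [EZ]
  rw [tsum_eq_single (fun i => i.elim0) (fun b hb => absurd (Subsingleton.elim b _) hb)]
  simp [trm]

lemma Fpoly_eq (q : ℕ) (t : Fin q → ℂ) : Fpoly q t =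
    (∑ j ∈ Finset.Icc 1 q, (-1 : ℂ) ^ (q - j + 2) * ez j (fun k => pad q t (q - j + k)))
      - (-1 : ℂ) ^ (q + 1) := by
  rw [Fpoly]
  congr 1
  rw [← Finset.sum_attach (Finset.Icc 1 q)
    (fun j => (-1 : ℂ) ^ (q - j + 2) * ez j (fun k => pad q t (q - j + k)))]
  refine Finset.sum_congr rfl fun j _ => ?_
  congr 1
  congr 1
  funext k
  have hj := j.2
  simp only [Finset.mem_Icc] at hj
  have hlt : q - j.1 + k.1 < q := by have := k.isLt; omega
  rw [pad, dif_pos hlt]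

lemma Fpoly_succ (q : ℕ) (t : Fin (q + 1) → ℂ) :
    Fpoly (q + 1) t = ez (q + 1) t - Fpoly q (Fin.tail t) := by
  rw [Fpoly_eq, Fpoly_eq]
  have hins : Finset.Icc 1 (q + 1) = insert (q + 1) (Finset.Icc 1 q) := by
    ext x
    simp only [Finset.mem_Icc, Finset.mem_insert]
    omega
  rw [hins, Finset.sum_insert (by simp [Finset.mem_Icc])]
  have htop : (-1 : ℂ) ^ (q + 1 - (q + 1) + 2)
      * ez (q + 1) (fun k => pad (q + 1) t (q + 1 - (q + 1) + k)) = ez (q + 1) t := by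
    rw [Nat.sub_self]
    simp only [pow_two, zero_add]
    norm_num
    congr 1
    funext k
    rw [pad, dif_pos k.isLt]
  have hrest : ∑ j ∈ Finset.Icc 1 q,
      (-1 : ℂ) ^ (q + 1 - j + 2) * ez j (fun k => pad (q + 1) t (q + 1 - j + k))
      = -∑ j ∈ Finset.Icc 1 q,
        (-1 : ℂ) ^ (q - j + 2) * ez j (fun k => pad q (Fin.tail t) (q - j + k)) := by
    rw [← Finset.sum_neg_distrib]
    refine Finset.sum_congr rfl fun j hj => ?_
    simp only [Finset.mem_Icc] at hj
    have hsign : (-1 : ℂ) ^ (q + 1 - j + 2) = -(-1 : ℂ) ^ (q - j + 2) := by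
      rw [show q + 1 - j + 2 = (q - j + 2) + 1 by omega, pow_succ]
      ring
    rw [hsign]
    have harg : (fun k : Fin j => pad (q + 1) t (q + 1 - j + k))
        = (fun k : Fin j => pad q (Fin.tail t) (q - j + k)) := by
      funext k
      have h1 : q + 1 - j + k.1 < q + 1 := by have := k.isLt; omega
      have h2 : q - j + k.1 < q := by have := k.isLt; omega
      rw [pad, pad, dif_pos h1, dif_pos h2]
      show t _ = t (Fin.succ _)
      congr 1
      apply Fin.ext
      simp only [Fin.val_succ]
      omega
    rw [harg]
    ring
  rw [htop, hrest]
  rw [show (q + 1 + 1 : ℕ) = (q + 1) + 1 by rfl, pow_succ]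
  ring

lemma Fpoly_eq_EZ (q : ℕ) (t : Fin q → ℂ) (h : ∀ k, 1 < (t k).re) :
    Fpoly q t = EZ 1 q t := by
  induction q with
  | zero =>
    rw [Fpoly_eq, EZ_zero]
    simp
  | succ q ih =>
    rw [Fpoly_succ, ih (Fin.tail t) (fun k => h k.succ), ez_eq_EZ, EZ_succ 0 q t h]
    norm_num

lemma norm_trm_one_le (q : ℕ) (t : Fin (q + 1) → ℂ) (n : Fin (q + 1) → ℕ) {τ : ℝ}
    (hτ0 : 0 ≤ τ) (hτ2 : τ ≤ 2) (h : ∀ k, τ ≤ (t k).re) (h0 : 2 ≤ (t 0).re) :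
    ‖trm (q + 1) 1 t n‖ ≤ 2 ^ (2 - (t 0).re) * maj (q + 1) τ n := by
  rw [trm, norm_prod, Fin.prod_univ_succ]
  have hmaj : maj (q + 1) τ n
      = ((n 0 : ℝ) + 1) ^ (-τ) * ∏ j : Fin q, ((n j.succ : ℝ) + 1) ^ (-τ) := by
    rw [maj, Fin.prod_univ_succ]
  rw [hmaj]
  have hb0 : ‖((1 + (∑ i ∈ Finset.Iic (0 : Fin (q + 1)), n i) + (0 : Fin (q + 1)).val + 1 : ℕ)
        : ℂ) ^ (-(t 0))‖ ≤ 2 ^ (2 - (t 0).re) * ((n 0 : ℝ) + 1) ^ (-τ) := by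
    apply norm_natCast_cpow_le2 hτ0 hτ2 h0
    rw [Iic_zero_fin]
    simp only [Finset.sum_singleton, Fin.val_zero]
    omega
  have hbs : ∀ j : Fin q,
      ‖((1 + (∑ i ∈ Finset.Iic (Fin.succ j), n i) + (Fin.succ j).val + 1 : ℕ) : ℂ)
        ^ (-(t (Fin.succ j)))‖ ≤ ((n (Fin.succ j) : ℝ) + 1) ^ (-τ) := by
    intro j
    refine norm_natCast_cpow_le hτ0 (h (Fin.succ j)) ?_
    have : n (Fin.succ j) ≤ ∑ i ∈ Finset.Iic (Fin.succ j), n i :=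
      Finset.single_le_sum (fun i _ => Nat.zero_le _) (Finset.mem_Iic.2 le_rfl)
    omega
  calc ‖((1 + (∑ i ∈ Finset.Iic (0 : Fin (q + 1)), n i) + (0 : Fin (q + 1)).val + 1 : ℕ)
          : ℂ) ^ (-(t 0))‖
        * ∏ j : Fin q, ‖((1 + (∑ i ∈ Finset.Iic (Fin.succ j), n i)
            + (Fin.succ j).val + 1 : ℕ) : ℂ) ^ (-(t (Fin.succ j)))‖
      ≤ (2 ^ (2 - (t 0).re) * ((n 0 : ℝ) + 1) ^ (-τ))
        * ∏ j : Fin q, ((n (Fin.succ j) : ℝ) + 1) ^ (-τ) := by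
        refine mul_le_mul hb0 ?_ (Finset.prod_nonneg fun j _ => norm_nonneg _) (by positivity)
        exact Finset.prod_le_prod (fun j _ => norm_nonneg _) fun j _ => hbs j
    _ = 2 ^ (2 - (t 0).re) * (((n 0 : ℝ) + 1) ^ (-τ)
        * ∏ j : Fin q, ((n (Fin.succ j) : ℝ) + 1) ^ (-τ)) := by ring

lemma norm_EZ_one_le (q : ℕ) (t : Fin (q + 1) → ℂ) {τ : ℝ}
    (hτ1 : 1 < τ) (hτ2 : τ ≤ 2) (h : ∀ k, τ ≤ (t k).re) (h0 : 2 ≤ (t 0).re) :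
    ‖EZ 1 (q + 1) t‖ ≤ 2 ^ (2 - (t 0).re) * ∑' n : Fin (q + 1) → ℕ, maj (q + 1) τ n := by
  have hτ0 : (0 : ℝ) ≤ τ := by linarith
  have hmaj := summable_maj (q + 1) hτ1
  have hb : ∀ n, ‖trm (q + 1) 1 t n‖ ≤ 2 ^ (2 - (t 0).re) * maj (q + 1) τ n :=
    fun n => norm_trm_one_le q t n hτ0 hτ2 h h0
  have hsn : Summable fun n : Fin (q + 1) → ℕ => ‖trm (q + 1) 1 t n‖ :=
    Summable.of_nonneg_of_le (fun n => norm_nonneg _) hb (hmaj.mul_left _)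
  calc ‖EZ 1 (q + 1) t‖ ≤ ∑' n, ‖trm (q + 1) 1 t n‖ := norm_tsum_le_tsum_norm hsn
    _ ≤ ∑' n, 2 ^ (2 - (t 0).re) * maj (q + 1) τ n := Summable.tsum_le_tsum hb hsn (hmaj.mul_left _)
    _ = 2 ^ (2 - (t 0).re) * ∑' n, maj (q + 1) τ n := tsum_mul_left

lemma continuousOn_EZ (a q : ℕ) {τ : ℝ} (hτ : 1 < τ) :
    ContinuousOn (fun t : Fin q → ℂ => EZ a q t) {t | ∀ k, τ ≤ (t k).re} := by
  rw [continuousOn_iff_continuous_restrict]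
  show Continuous fun x : {t : Fin q → ℂ | ∀ k, τ ≤ (t k).re} =>
    ∑' n : Fin q → ℕ, trm q a (↑x) n
  refine continuous_tsum (u := maj q τ) ?_ (summable_maj q hτ) ?_
  · intro n
    have hfun : (fun x : {t : Fin q → ℂ | ∀ k, τ ≤ (t k).re} => trm q a (↑x) n)
        = fun x => ∏ k : Fin q,
            ((a + (∑ i ∈ Finset.Iic k, n i) + k + 1 : ℕ) : ℂ) ^ (-(x.1 k)) := rfl
    rw [hfun]
    apply continuous_finset_prod
    intro k _
    refine Continuous.const_cpow ?_ (Or.inl (Nat.cast_ne_zero.2 (by omega)))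
    exact ((continuous_apply k).comp continuous_subtype_val).neg
  · exact fun n x => norm_trm_le q a (↑x) n (by linarith) x.2

/-- Let `r = m + 2 ≥ 2`. If `(s₁⁽ʲ⁾,…,s_r⁽ʲ⁾)` are zeros of `ζ_r` with all coordinates of
real part `> 1`, `Re s₁⁽ʲ⁾ → +∞`, and `(s₂⁽ʲ⁾,…,s_r⁽ʲ⁾)` lying in a compact subset of
`{Re > 1}^{r−1}`, then every limit point `(ρ₂,…,ρ_r)` of `(s₂⁽ʲ⁾,…,s_r⁽ʲ⁾)` satisfies
`F_{r−1}(ρ₂,…,ρ_r) = 0`. -/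
theorem limit_points_on_hypersurface (m : ℕ) (s : ℕ → Fin (m + 2) → ℂ)
    (hzero : ∀ j, ez (m + 2) (s j) = 0)
    (hre : ∀ j k, 1 < (s j k).re)
    (htend : Filter.Tendsto (fun j => (s j 0).re) Filter.atTop Filter.atTop)
    (K : Set (Fin (m + 1) → ℂ)) (hK : IsCompact K)
    (hK1 : K ⊆ {t : Fin (m + 1) → ℂ | ∀ k, 1 < (t k).re})
    (hmem : ∀ j, (fun k => s j k.succ) ∈ K) :
    ∀ ρ : Fin (m + 1) → ℂ,
      (∃ φ : ℕ → ℕ, StrictMono φ ∧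
        Filter.Tendsto (fun j => fun k => s (φ j) k.succ) Filter.atTop (nhds ρ)) →
      Fpoly (m + 1) ρ = 0 := by
  rintro ρ ⟨φ, hφ, hconv⟩
  have hKne : K.Nonempty := ⟨_, hmem 0⟩
  have hcoord : ∀ k : Fin (m + 1), ∃ σk : ℝ, 1 < σk ∧ ∀ t ∈ K, σk ≤ (t k).re := by
    intro k
    obtain ⟨x, hxK, hx⟩ := hK.exists_isMinOn hKne
      ((Complex.continuous_re.comp (continuous_apply k)).continuousOn)
    exact ⟨(x k).re, hK1 hxK k, fun t ht => hx ht⟩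
  choose σf hσf1 hσf2 using hcoord
  set τ : ℝ := min (Finset.univ.inf' ⟨0, Finset.mem_univ 0⟩ σf) 2 with hτdef
  have hτ1 : 1 < τ := by
    rw [hτdef]
    refine lt_min ?_ one_lt_two
    apply (Finset.lt_inf'_iff _).2
    exact fun k _ => hσf1 k
  have hτ2 : τ ≤ 2 := min_le_right _ _
  have hτK : ∀ t ∈ K, ∀ k, τ ≤ (t k).re := fun t ht k =>
    le_trans (le_trans (min_le_left _ _) (Finset.inf'_le _ (Finset.mem_univ k))) (hσf2 k t ht)
  have hρK : ρ ∈ K :=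
    hK.isClosed.mem_of_tendsto hconv (Filter.Eventually.of_forall fun j => hmem (φ j))
  set S : Set (Fin (m + 1) → ℂ) := {t | ∀ k, τ ≤ (t k).re} with hSdef
  have hKS : K ⊆ S := fun t ht k => hτK t ht k
  -- convergence of EZ 1 along the subsequence by continuity
  have hcont : ContinuousOn (fun t => EZ 1 (m + 1) t) S := continuousOn_EZ 1 (m + 1) hτ1
  have hFcont : Filter.Tendsto (fun j => EZ 1 (m + 1) (fun k => s (φ j) k.succ))
      Filter.atTop (nhds (EZ 1 (m + 1) ρ)) := by
    have h1 := (hcont ρ (hKS hρK)).tendsto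
    refine h1.comp ?_
    rw [tendsto_nhdsWithin_iff]
    exact ⟨hconv, Filter.Eventually.of_forall fun j => hKS (hmem (φ j))⟩
  -- identity: EZ 1 (m+1) (tail) = -EZ 1 (m+2) (s j)
  have hid : ∀ j, EZ 1 (m + 1) (fun k => s j k.succ) = - EZ 1 (m + 2) (s j) := by
    intro j
    have h2 := EZ_succ 0 (m + 1) (s j) (hre j)
    rw [← ez_eq_EZ, hzero j] at h2
    have h3 : ((0 + 1 : ℕ) : ℂ) ^ (-(s j 0)) = 1 := by
      norm_num
    rw [h3, one_mul] at h2
    have h4 : Fin.tail (s j) = (fun k => s j k.succ) := rfl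
    rw [h4] at h2
    norm_num at h2
    linear_combination -h2
  -- the subsequence of real parts tends to infinity
  have hrφ : Filter.Tendsto (fun j => (s (φ j) 0).re) Filter.atTop Filter.atTop :=
    htend.comp hφ.tendsto_atTop
  set C : ℝ := ∑' n : Fin (m + 2) → ℕ, maj (m + 2) τ n with hCdef
  -- eventual bound
  have hev : ∀ᶠ j in Filter.atTop,
      ‖EZ 1 (m + 2) (s (φ j))‖ ≤ 2 ^ (2 - (s (φ j) 0).re) * C := by
    filter_upwards [hrφ.eventually_ge_atTop 2] with j hj
    refine norm_EZ_one_le (m + 1) (s (φ j)) hτ1 hτ2 ?_ hj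
    intro k
    refine Fin.cases ?_ ?_ k
    · exact le_trans hτ2 hj
    · intro k'
      exact hτK _ (hmem (φ j)) k'
  -- the bound tends to zero
  have hb0 : Filter.Tendsto (fun j => (2 : ℝ) ^ (2 - (s (φ j) 0).re) * C)
      Filter.atTop (nhds 0) := by
    have hneg : Filter.Tendsto (fun j => 2 - (s (φ j) 0).re) Filter.atTop Filter.atBot := by
      have h5 : Filter.Tendsto (fun j => (s (φ j) 0).re - 2) Filter.atTop Filter.atTop :=
        Filter.tendsto_atTop_add_const_right _ (-2) hrφ
      have := Filter.tendsto_neg_atBot_iff.mpr h5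
      refine this.congr fun j => by ring
    have hmul : Filter.Tendsto (fun j => Real.log 2 * (2 - (s (φ j) 0).re))
        Filter.atTop Filter.atBot :=
      hneg.const_mul_atBot (Real.log_pos (by norm_num))
    have hexp : Filter.Tendsto (fun j => Real.exp (Real.log 2 * (2 - (s (φ j) 0).re)))
        Filter.atTop (nhds 0) := Real.tendsto_exp_atBot.comp hmul
    have heq : (fun j => (2 : ℝ) ^ (2 - (s (φ j) 0).re) * C)
        = fun j => Real.exp (Real.log 2 * (2 - (s (φ j) 0).re)) * C := by
      funext j
      rw [Real.rpow_def_of_pos (by norm_num)]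
    have h6 := hexp.mul_const C
    rw [zero_mul] at h6
    rw [heq]
    exact h6
  -- squeeze
  have hsq : Filter.Tendsto (fun j => EZ 1 (m + 2) (s (φ j))) Filter.atTop (nhds 0) :=
    squeeze_zero_norm' hev hb0
  have hsq2 : Filter.Tendsto (fun j => EZ 1 (m + 1) (fun k => s (φ j) k.succ))
      Filter.atTop (nhds 0) := by
    have heq : (fun j => EZ 1 (m + 1) (fun k => s (φ j) k.succ))
        = fun j => - EZ 1 (m + 2) (s (φ j)) := funext fun j => hid (φ j)
    rw [heq]
    simpa using hsq.neg
  have hzeroEZ : EZ 1 (m + 1) ρ = 0 := tendsto_nhds_unique hFcont hsq2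
  rw [Fpoly_eq_EZ (m + 1) ρ (fun k => hK1 hρK k), hzeroEZ]
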